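/- For every n ∈ ℕ and all x, y, z ∈ BitVec n, the identity 2*((y & (~z)) | (x & (y | (~z)))) - (x ^ y ^ z) = x + y - z holds, where ^ denotes bitwise xor and arithmetic is modulo 2^n. -/

import Mathlib

theorem nat_adder (a : ℕ) : ∀ b : ℕ, a + b = (a ^^^ b) + 2 * (a &&& b) := by
  induction a using Nat.strong_induction_on with
  | _ a ih =>
    intro b
    rcases Nat.eq_zero_or_pos a with rfl | ha
    · simp
    have h2 : a / 2 < a := Nat.div_lt_self ha (by norm_num)
    have key := ih (a / 2) h2 (b / 2)
    have hx : (a ^^^ b) = 2 * (a / 2 ^^^ b / 2) + (a ^^^ b) % 2 := by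
      conv_lhs => rw [← Nat.div_add_mod (a ^^^ b) 2]
      rw [Nat.xor_div_two]
    have hand : (a &&& b) = 2 * (a / 2 &&& b / 2) + (a &&& b) % 2 := by
      conv_lhs => rw [← Nat.div_add_mod (a &&& b) 2]
      rw [Nat.and_div_two]
    have hb : a % 2 + b % 2 = (a ^^^ b) % 2 + 2 * ((a &&& b) % 2) := by
      rcases Nat.mod_two_eq_zero_or_one a with h1 | h1 <;>
      rcases Nat.mod_two_eq_zero_or_one b with h2 | h2 <;>
        simp [Nat.xor_mod_two_eq, Nat.add_mod, h1, h2, Nat.and_mod_two_eq_one,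
          Nat.mod_two_eq_zero_iff_testBit_zero]
    have ea := Nat.div_add_mod a 2
    have eb := Nat.div_add_mod b 2
    omega

theorem bv_adder {n : ℕ} (x y : BitVec n) : x + y = (x ^^^ y) + 2 * (x &&& y) := by
  apply BitVec.eq_of_toNat_eq
  have h := nat_adder x.toNat y.toNat
  simp [BitVec.toNat_add, BitVec.toNat_mul, BitVec.toNat_xor, BitVec.toNat_and, Nat.add_mod,
    Nat.mul_mod, h]

theorem maj_eq {n : ℕ} (x y w : BitVec n) :
    (y &&& w) ||| (x &&& (y ||| w)) = (x &&& y) ^^^ ((x ^^^ y) &&& w) := by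
  ext i
  simp only [BitVec.getElem_or, BitVec.getElem_and, BitVec.getElem_xor]
  cases x[i] <;> cases y[i] <;> cases w[i] <;> rfl

theorem disj_zero {n : ℕ} (x y w : BitVec n) : (x &&& y) &&& ((x ^^^ y) &&& w) = 0 := by
  ext i
  simp only [BitVec.getElem_and, BitVec.getElem_xor, BitVec.getElem_zero]
  cases x[i] <;> cases y[i] <;> cases w[i] <;> simp

theorem full_adder {n : ℕ} (x y w : BitVec n) :
    x + y + w = (x ^^^ y ^^^ w) + 2 * ((y &&& w) ||| (x &&& (y ||| w))) := by
  rw [maj_eq]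
  have h1 := bv_adder x y
  have h2 := bv_adder (x ^^^ y) w
  have h3 := bv_adder (x &&& y) ((x ^^^ y) &&& w)
  rw [disj_zero] at h3
  rw [h1]
  calc (x ^^^ y) + 2 * (x &&& y) + w
      = ((x ^^^ y) + w) + 2 * (x &&& y) := by ring
    _ = (x ^^^ y ^^^ w) + 2 * ((x ^^^ y) &&& w) + 2 * (x &&& y) := by rw [h2]
    _ = (x ^^^ y ^^^ w) + 2 * ((x &&& y) + ((x ^^^ y) &&& w)) := by ring
    _ = _ := by rw [h3]; ring

/-- `2((y & ~z) | (x & (y | ~z))) - (x ^ y ^ z) = x + y - z` in `BitVec n`. -/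
theorem mba_e4 (n : ℕ) (x y z : BitVec n) :
    2 * ((y &&& ~~~z) ||| (x &&& (y ||| ~~~z))) - (x ^^^ y ^^^ z) = x + y - z := by
  have h1 : (1#n : BitVec n) = 1 := rfl
  have hneg : -z = ~~~z + 1 := by rw [BitVec.neg_eq_not_add, h1]
  have hfa := full_adder x y (~~~z)
  have hx : x ^^^ y ^^^ z = ~~~(x ^^^ y ^^^ ~~~z) := by
    ext i
    simp only [BitVec.getElem_xor, BitVec.getElem_not]
    cases x[i] <;> cases y[i] <;> cases z[i] <;> rfl
  have hnot : ~~~(x ^^^ y ^^^ ~~~z) = -(x ^^^ y ^^^ ~~~z) - 1 := by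
    have := BitVec.neg_eq_not_add (x ^^^ y ^^^ ~~~z)
    rw [h1] at this
    linear_combination -this
  rw [hx, hnot]
  linear_combination -hfa - hneg
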